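/- If all m goods are pairwise s-independent and no intersection point of two disputing segments coincides with a good's location in the RNS, the number of Pareto faces is at most m + C(m,2) = m(m+1)/2. -/

import Mathlib

/-- The `i`-th vertex of the 2-simplex in ℝ³. -/
noncomputable def vert (i : Fin 3) : Fin 3 → ℝ := Pi.single i 1

/-- Two points of the simplex are support independent if neither lies on a
supporting segment (segment joining the point to a vertex) of the other. -/
def SIndep (p q : Fin 3 → ℝ) : Prop :=
  (∀ i, p ∉ segment ℝ q (vert i)) ∧ ∀ i, q ∉ segment ℝ p (vert i)

/-- Intersection points of the (open) supporting segments of two distinct goods. -/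
def interPts {m : ℕ} (P : Fin m → Fin 3 → ℝ) : Set (Fin 3 → ℝ) :=
  {x | ∃ j k, j ≠ k ∧
    x ∈ (⋃ i, openSegment ℝ (P j) (vert i)) ∩ ⋃ i, openSegment ℝ (P k) (vert i)}

lemma vert_apply (i c : Fin 3) : vert i c = if c = i then 1 else 0 := by
  simp [vert, Pi.single_apply]

lemma mem_openSeg_iff {p x : Fin 3 → ℝ} {i : Fin 3} :
    x ∈ openSegment ℝ p (vert i) ↔
      ∃ t : ℝ, 0 < t ∧ t < 1 ∧ ∀ c, x c = (1 - t) * p c + (if c = i then t else 0) := by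
  constructor
  · rintro ⟨a, b, ha, hb, hab, rfl⟩
    refine ⟨b, hb, by linarith, fun c => ?_⟩
    have haa : a = 1 - b := by linarith
    simp [haa, vert_apply, mul_ite]
  · rintro ⟨t, ht0, ht1, hx⟩
    refine ⟨1 - t, t, by linarith, ht0, by ring, funext fun c => ?_⟩
    rw [hx c]
    simp only [Pi.add_apply, Pi.smul_apply, smul_eq_mul, vert_apply, mul_ite, mul_one, mul_zero]

lemma fin3_third : ∀ i j : Fin 3, i ≠ j →
    ∃ h : Fin 3, h ≠ i ∧ h ≠ j ∧ ∀ a : Fin 3, a = i ∨ a = j ∨ a = h := by decide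

lemma fin3_others : ∀ i : Fin 3, ∃ a b : Fin 3, a ≠ b ∧ a ≠ i ∧ b ≠ i := by decide

lemma sum3 (f : Fin 3 → ℝ) {i j k : Fin 3} (hij : i ≠ j) (hik : i ≠ k) (hjk : j ≠ k) :
    ∑ a, f a = f i + f j + f k := by
  fin_cases i <;> fin_cases j <;> fin_cases k <;>
    simp_all [Fin.sum_univ_three] <;> ring

lemma cross_ne {p q : Fin 3 → ℝ} (hp : ∀ i, 0 < p i) (hps : ∑ i, p i = 1)
    (hq : ∀ i, 0 < q i) (hqs : ∑ i, q i = 1) (hind : SIndep p q)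
    {j k : Fin 3} (hjk : j ≠ k) : q j * p k ≠ q k * p j := by
  intro heq
  obtain ⟨i, hij, hik, hall⟩ := fin3_third j k hjk
  set c : ℝ := q j / p j with hc
  have hpj := hp j
  have hcj : q j = c * p j := by rw [hc, div_mul_cancel₀ _ hpj.ne']
  have hck : q k = c * p k := by
    rw [hc]; field_simp; linarith [heq]
  have hc0 : 0 < c := div_pos (hq j) (hp j)
  have hsp : p i + p j + p k = 1 := by
    rw [← sum3 p hij hik hjk]; exact hps
  have hsq : q i + q j + q k = 1 := by
    rw [← sum3 q hij hik hjk]; exact hqs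
  have hqi : q i = c * p i + (1 - c) := by
    have h1 : q i = 1 - c * p j - c * p k := by rw [← hcj, ← hck]; linarith
    have h2 : p j + p k = 1 - p i := by linarith
    rw [h1]; nlinarith [h2]
  rcases le_or_gt c 1 with hc1 | hc1
  · exact hind.2 i ⟨c, 1 - c, le_of_lt hc0, by linarith, by ring, funext fun a => by
      rcases hall a with rfl | rfl | rfl <;>
        simp [vert_apply, hij.symm ,hik.symm, mul_ite] <;>
          [linarith [hcj]; linarith [hck]; linarith [hqi]]⟩
  · have hcinv0 : (0:ℝ) < c⁻¹ := by positivity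
    have hcinv1 : c⁻¹ < 1 := by rw [inv_lt_one_iff₀]; right; exact hc1
    refine hind.1 i ⟨c⁻¹, 1 - c⁻¹, le_of_lt hcinv0, by linarith, by ring, funext fun a => ?_⟩
    have hcne : c ≠ 0 := ne_of_gt hc0
    have hpj' : p j = c⁻¹ * q j := by rw [hcj]; field_simp
    have hpk' : p k = c⁻¹ * q k := by rw [hck]; field_simp
    have hpi' : p i = c⁻¹ * q i + (1 - c⁻¹) := by
      rw [hqi]; field_simp; ring
    rcases hall a with rfl | rfl | rfl <;>
      simp [vert_apply, hij.symm, hik.symm, mul_ite] <;>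
        [linarith [hpj']; linarith [hpk']; linarith [hpi']]

lemma order_of_inter {p q x : Fin 3 → ℝ} (hp : ∀ i, 0 < p i) (hq : ∀ i, 0 < q i)
    {i j h : Fin 3} (hij : i ≠ j) (hhi : h ≠ i) (hhj : h ≠ j)
    (hx1 : x ∈ openSegment ℝ p (vert i)) (hx2 : x ∈ openSegment ℝ q (vert j)) :
    q h * p i < q i * p h ∧ q j * p h < q h * p j := by
  obtain ⟨t, ht0, ht1, hxt⟩ := mem_openSeg_iff.mp hx1
  obtain ⟨s, hs0, hs1, hxs⟩ := mem_openSeg_iff.mp hx2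
  have eh : (1 - t) * p h = (1 - s) * q h := by
    have e1 := hxt h; have e2 := hxs h
    simp [hhi, hhj] at e1 e2; linarith
  have ei : (1 - t) * p i + t = (1 - s) * q i := by
    have e1 := hxt i; have e2 := hxs i
    simp [hij] at e1 e2; linarith
  have ej : (1 - t) * p j = (1 - s) * q j + s := by
    have e1 := hxt j; have e2 := hxs j
    simp [hij.symm] at e1 e2; linarith
  have h1t : (0:ℝ) < 1 - t := by linarith
  have h1s : (0:ℝ) < 1 - s := by linarith
  constructor
  · have key : (1 - s) * (1 - t) * (q i * p h - q h * p i) = t * ((1 - t) * p h) := by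
      linear_combination (-((1-t) * p h)) * ei + ((1-t) * p i) * eh
    nlinarith [mul_pos ht0 (mul_pos h1t (hp h)), mul_pos h1s h1t]
  · have key : (1 - s) * (1 - t) * (q h * p j - q j * p h) = s * ((1 - t) * p h) := by
      linear_combination ((1-t) * p h) * ej - ((1-t) * p j) * eh
    nlinarith [mul_pos hs0 (mul_pos h1t (hp h)), mul_pos h1s h1t]

lemma nosame {p q : Fin 3 → ℝ} (hp : ∀ i, 0 < p i) (hps : ∑ i, p i = 1)
    (hq : ∀ i, 0 < q i) (hqs : ∑ i, q i = 1) (hind : SIndep p q)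
    {z : Fin 3 → ℝ} {i : Fin 3} (hz1 : z ∈ openSegment ℝ p (vert i))
    (hz2 : z ∈ openSegment ℝ q (vert i)) : False := by
  obtain ⟨t, ht0, ht1, hzt⟩ := mem_openSeg_iff.mp hz1
  obtain ⟨s, hs0, hs1, hzs⟩ := mem_openSeg_iff.mp hz2
  obtain ⟨a, b, hab, hai, hbi⟩ := fin3_others i
  have ea : (1 - t) * p a = (1 - s) * q a := by
    have e1 := hzt a; have e2 := hzs a; simp [hai] at e1 e2; linarith
  have eb : (1 - t) * p b = (1 - s) * q b := by
    have e1 := hzt b; have e2 := hzs b; simp [hbi] at e1 e2; linarith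
  have key : (1 - s) * (1 - t) * (q a * p b - q b * p a) = 0 := by
    linear_combination (-((1-t) * p b)) * ea + ((1-t) * p a) * eb
  have h1 : (1 - s) * (1 - t) ≠ 0 :=
    ne_of_gt (mul_pos (by linarith) (by linarith))
  have : q a * p b = q b * p a := by
    have := (mul_eq_zero.mp key).resolve_left h1
    linarith
  exact cross_ne hp hps hq hqs hind hab this

lemma key_subsingleton {p q : Fin 3 → ℝ} (hp : ∀ i, 0 < p i) (hps : ∑ i, p i = 1)
    (hq : ∀ i, 0 < q i) (hqs : ∑ i, q i = 1) (hind : SIndep p q) :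
    Set.Subsingleton ((⋃ i, openSegment ℝ p (vert i)) ∩ ⋃ i, openSegment ℝ q (vert i)) := by
  set r : Fin 3 → ℝ := fun a => q a / p a with hr
  have hrlt : ∀ a b : Fin 3, q a * p b < q b * p a ↔ r a < r b := fun a b =>
    (div_lt_div_iff₀ (hp a) (hp b)).symm
  have hrne : ∀ a b : Fin 3, a ≠ b → r a ≠ r b := by
    intro a b hab hrab
    refine cross_ne hp hps hq hqs hind hab ?_
    have := (div_eq_div_iff (hp a).ne' (hp b).ne').mp hrab
    linarith
  rintro x ⟨hx1, hx2⟩ y ⟨hy1, hy2⟩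
  simp only [Set.mem_iUnion] at hx1 hx2 hy1 hy2
  obtain ⟨i₁, hxi⟩ := hx1; obtain ⟨j₁, hxj⟩ := hx2
  obtain ⟨i₂, hyi⟩ := hy1; obtain ⟨j₂, hyj⟩ := hy2
  have hne1 : i₁ ≠ j₁ := fun h => nosame hp hps hq hqs hind hxi (h ▸ hxj)
  have hne2 : i₂ ≠ j₂ := fun h => nosame hp hps hq hqs hind hyi (h ▸ hyj)
  obtain ⟨h₁, hh1i, hh1j, hall1⟩ := fin3_third i₁ j₁ hne1
  obtain ⟨h₂, hh2i, hh2j, hall2⟩ := fin3_third i₂ j₂ hne2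
  obtain ⟨o1a, o1b⟩ := order_of_inter hp hq hne1 hh1i hh1j hxi hxj
  obtain ⟨o2a, o2b⟩ := order_of_inter hp hq hne2 hh2i hh2j hyi hyj
  rw [hrlt] at o1a o1b o2a o2b
  have max1 : ∀ a, a ≠ i₁ → r a < r i₁ := by
    intro a ha
    rcases hall1 a with rfl | rfl | rfl
    · exact absurd rfl ha
    · exact lt_trans o1b o1a
    · exact o1a
  have max2 : ∀ a, a ≠ i₂ → r a < r i₂ := by
    intro a ha
    rcases hall2 a with rfl | rfl | rfl
    · exact absurd rfl ha
    · exact lt_trans o2b o2a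
    · exact o2a
  have min1 : ∀ a, a ≠ j₁ → r j₁ < r a := by
    intro a ha
    rcases hall1 a with rfl | rfl | rfl
    · exact lt_trans o1b o1a
    · exact absurd rfl ha
    · exact o1b
  have min2 : ∀ a, a ≠ j₂ → r j₂ < r a := by
    intro a ha
    rcases hall2 a with rfl | rfl | rfl
    · exact lt_trans o2b o2a
    · exact absurd rfl ha
    · exact o2b
  have hii : i₁ = i₂ := by
    by_contra hne
    exact lt_asymm (max1 i₂ (Ne.symm hne)) (max2 i₁ hne)
  have hjj : j₁ = j₂ := by
    by_contra hne
    exact lt_asymm (min1 j₂ (Ne.symm hne)) (min2 j₁ hne)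
  subst hii; subst hjj
  obtain ⟨t, ht0, ht1, hxt⟩ := mem_openSeg_iff.mp hxi
  obtain ⟨s, hs0, hs1, hxs⟩ := mem_openSeg_iff.mp hxj
  obtain ⟨t', ht0', ht1', hyt⟩ := mem_openSeg_iff.mp hyi
  obtain ⟨s', hs0', hs1', hys⟩ := mem_openSeg_iff.mp hyj
  set F : ℝ := p h₁ * q i₁ - p i₁ * q h₁ with hF
  have hF0 : 0 < F := by
    rw [← hrlt] at o1a; rw [hF]; nlinarith [o1a]
  have eh : (1 - t) * p h₁ = (1 - s) * q h₁ := by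
    have e1 := hxt h₁; have e2 := hxs h₁; simp [hh1i, hh1j] at e1 e2; linarith
  have ei : (1 - t) * p i₁ + t = (1 - s) * q i₁ := by
    have e1 := hxt i₁; have e2 := hxs i₁; simp [hne1] at e1 e2; linarith
  have eh' : (1 - t') * p h₁ = (1 - s') * q h₁ := by
    have e1 := hyt h₁; have e2 := hys h₁; simp [hh1i, hh1j] at e1 e2; linarith
  have ei' : (1 - t') * p i₁ + t' = (1 - s') * q i₁ := by
    have e1 := hyt i₁; have e2 := hys i₁; simp [hne1] at e1 e2; linarith
  have et : t * q h₁ = (1 - t) * F := by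
    linear_combination (q h₁) * ei - (q i₁) * eh
  have et' : t' * q h₁ = (1 - t') * F := by
    linear_combination (q h₁) * ei' - (q i₁) * eh'
  have htt : t = t' := by
    have hz : (t - t') * (q h₁ + F) = 0 := by linear_combination et - et'
    have : q h₁ + F ≠ 0 := ne_of_gt (by linarith [hq h₁])
    have := (mul_eq_zero.mp hz).resolve_right this
    linarith
  subst htt
  funext c
  rw [hxt c, hyt c]

lemma ncard_biUnion_le' {α β : Type*} [DecidableEq β] (T : Finset β) (S : β → Set α) :
    (⋃ e ∈ T, S e).ncard ≤ ∑ e ∈ T, (S e).ncard := by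
  induction T using Finset.induction with
  | empty => simp
  | @insert a s ha ih =>
      rw [Finset.sum_insert ha]
      have : (⋃ e ∈ insert a s, S e) = S a ∪ ⋃ e ∈ s, S e := by
        simp [Set.biUnion_insert]
      rw [this]
      exact (Set.ncard_union_le _ _).trans (add_le_add_right ih _)

theorem number_of_pareto_faces_bound (m : ℕ) (P : Fin m → Fin 3 → ℝ)
    (hP : ∀ j, (∀ i, 0 < P j i) ∧ ∑ i, P j i = 1)
    (hind : ∀ j k, j ≠ k → SIndep (P j) (P k))
    (hnocoinc : ∀ x ∈ interPts P, ∀ j, x ≠ P j) :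
    (Set.range P ∪ interPts P).ncard ≤ m * (m + 1) / 2 := by
  classical
  set S : Fin m → Fin m → Set (Fin 3 → ℝ) := fun j k =>
    (⋃ i, openSegment ℝ (P j) (vert i)) ∩ ⋃ i, openSegment ℝ (P k) (vert i) with hS
  have hsymm : ∀ j k, S j k = S k j := fun j k => Set.inter_comm _ _
  set S2 : Sym2 (Fin m) → Set (Fin 3 → ℝ) := Sym2.lift ⟨S, hsymm⟩ with hS2
  set T : Finset (Sym2 (Fin m)) := Finset.univ.offDiag.image Sym2.mk.uncurry with hT
  have hss : ∀ e ∈ T, (S2 e).Subsingleton := by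
    intro e he
    rw [hT, Finset.mem_image] at he
    obtain ⟨⟨j, k⟩, hjk, rfl⟩ := he
    rw [Finset.mem_offDiag] at hjk
    have hne : j ≠ k := hjk.2.2
    have : S2 (Sym2.mk.uncurry (j, k)) = S j k := rfl
    rw [this, hS]
    exact key_subsingleton (hP j).1 (hP j).2 (hP k).1 (hP k).2 (hind j k hne)
  have hsub : ∀ e ∈ T, (S2 e).ncard ≤ 1 := by
    intro e he
    rcases (hss e he).eq_empty_or_singleton with h | ⟨x, h⟩ <;> simp [h]
  have hcov : interPts P ⊆ ⋃ e ∈ T, S2 e := by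
    rintro x ⟨j, k, hjk, hx⟩
    have hmem : Sym2.mk.uncurry (j, k) ∈ T := by
      rw [hT, Finset.mem_image]
      exact ⟨(j, k), Finset.mem_offDiag.mpr ⟨Finset.mem_univ _, Finset.mem_univ _, hjk⟩, rfl⟩
    exact Set.mem_biUnion hmem hx
  have hfin : (⋃ e ∈ T, S2 e).Finite :=
    Set.Finite.biUnion T.finite_toSet (fun e he => (hss e he).finite)
  have h2 : (interPts P).ncard ≤ m.choose 2 := by
    calc (interPts P).ncard ≤ (⋃ e ∈ T, S2 e).ncard :=
          Set.ncard_le_ncard hcov hfin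
      _ ≤ ∑ e ∈ T, (S2 e).ncard := ncard_biUnion_le' T S2
      _ ≤ ∑ _e ∈ T, 1 := Finset.sum_le_sum hsub
      _ = T.card := by simp
      _ = m.choose 2 := by
          rw [hT, Sym2.card_image_offDiag]; simp
  have h1 : (Set.range P).ncard ≤ m := by
    have : Set.range P = ↑(Finset.univ.image P) := by
      rw [Finset.coe_image, Finset.coe_univ, Set.image_univ]
    rw [this, Set.ncard_coe_finset]
    exact (Finset.card_image_le).trans (by simp)
  calc (Set.range P ∪ interPts P).ncard
      ≤ (Set.range P).ncard + (interPts P).ncard := Set.ncard_union_le _ _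
    _ ≤ m + m.choose 2 := add_le_add h1 h2
    _ = (m + 1).choose 2 := by
        rw [Nat.choose_succ_succ, Nat.choose_one_right]
    _ = m * (m + 1) / 2 := by
        rw [Nat.choose_two_right]; simp [Nat.mul_comm]
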